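/- arXiv:2105.09185 — 4 statements merged into one kernel-verified Lean document; each statement's English description precedes it below -/
import Mathlib

section
/- Let ζ ∈ [0,1), r > 1, p ≥ 2 and t ≥ 0, and for s ∈ [0,t] set r_s = e^{(1−ζ)(τ_t − τ_s)} r. Then ∫₀^t (r_s/(r_s − 1))^p ds ≤ (2(1+t)/(1−ζ)) (r/(r−1))^{p−1}. -/
open Complex

/-- For `ζ ∈ ℝ`, `τ_t = t` if `ζ = 0` and `τ_t = ζ⁻¹ log(1 + ζ t)` otherwise. -/
noncomputable def tauLK (ζ t : ℝ) : ℝ := if ζ = 0 then t else ζ⁻¹ * Real.log (1 + ζ * t)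

lemma tau_deriv (ζ : ℝ) (hζ0 : 0 ≤ ζ) (s : ℝ) (hs : 0 ≤ s) :
    HasDerivAt (tauLK ζ) (1 / (1 + ζ * s)) s := by
  have hpos : (0:ℝ) < 1 + ζ * s := by nlinarith
  rcases eq_or_ne ζ 0 with h0 | h0
  · have he : tauLK ζ = fun u => u := by funext u; simp [tauLK, h0]
    rw [he]
    simpa [h0] using hasDerivAt_id' s
  · have he : tauLK ζ = fun u => ζ⁻¹ * Real.log (1 + ζ * u) := by
      funext u; simp [tauLK, h0]
    rw [he]
    have h1 : HasDerivAt (fun u : ℝ => 1 + ζ * u) ζ s := by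
      simpa using ((hasDerivAt_id s).const_mul ζ).const_add 1
    have h2 := (h1.log (ne_of_gt hpos)).const_mul ζ⁻¹
    refine h2.congr_deriv ?_
    field_simp

lemma tau_mono (ζ : ℝ) (hζ0 : 0 ≤ ζ) {s t : ℝ} (hs : 0 ≤ s) (hst : s ≤ t) :
    tauLK ζ s ≤ tauLK ζ t := by
  rcases eq_or_ne ζ 0 with h0 | h0
  · simp [tauLK, h0, hst]
  · have hζpos : 0 < ζ := lt_of_le_of_ne hζ0 (Ne.symm h0)
    simp only [tauLK, if_neg h0]
    gcongr


noncomputable def rhoA (ζ r t s : ℝ) : ℝ := Real.exp ((1 - ζ) * (tauLK ζ t - tauLK ζ s)) * r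

noncomputable def yA (ζ r t s : ℝ) : ℝ := rhoA ζ r t s / (rhoA ζ r t s - 1)

lemma rhoA_gt (ζ r t s : ℝ) (hζ0 : 0 ≤ ζ) (hζ1 : ζ < 1) (hr : 1 < r) (hs : 0 ≤ s)
    (hst : s ≤ t) : r ≤ rhoA ζ r t s := by
  have h1 : 0 ≤ (1 - ζ) * (tauLK ζ t - tauLK ζ s) := by
    have := tau_mono ζ hζ0 hs hst
    nlinarith
  have h2 : (1:ℝ) ≤ Real.exp ((1 - ζ) * (tauLK ζ t - tauLK ζ s)) := Real.one_le_exp h1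
  have : (1:ℝ) * r ≤ Real.exp ((1 - ζ) * (tauLK ζ t - tauLK ζ s)) * r :=
    mul_le_mul_of_nonneg_right h2 (by linarith)
  simpa [rhoA] using this

lemma yA_gt (ζ r t s : ℝ) (hζ0 : 0 ≤ ζ) (hζ1 : ζ < 1) (hr : 1 < r) (hs : 0 ≤ s)
    (hst : s ≤ t) : 1 < yA ζ r t s := by
  have h := rhoA_gt ζ r t s hζ0 hζ1 hr hs hst
  have h1 : 0 < rhoA ζ r t s - 1 := by linarith
  rw [yA, lt_div_iff₀ h1]
  linarith

lemma yA_deriv (ζ r t s : ℝ) (hζ0 : 0 ≤ ζ) (hζ1 : ζ < 1) (hr : 1 < r) (hs : 0 ≤ s)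
    (hst : s ≤ t) :
    HasDerivAt (yA ζ r t)
      ((1 - ζ) / (1 + ζ * s) * (yA ζ r t s * (yA ζ r t s - 1))) s := by
  have hpos : (0:ℝ) < 1 + ζ * s := by nlinarith
  have hρ : r ≤ rhoA ζ r t s := rhoA_gt ζ r t s hζ0 hζ1 hr hs hst
  have hρ1 : 0 < rhoA ζ r t s - 1 := by linarith
  have h1 : HasDerivAt (fun u => (1 - ζ) * (tauLK ζ t - tauLK ζ u))
      ((1 - ζ) * -(1 / (1 + ζ * s))) s :=
    ((tau_deriv ζ hζ0 s hs).const_sub (tauLK ζ t)).const_mul (1 - ζ)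
  have h2 : HasDerivAt (rhoA ζ r t)
      (Real.exp ((1 - ζ) * (tauLK ζ t - tauLK ζ s)) * ((1 - ζ) * -(1 / (1 + ζ * s))) * r)
      s := by
    have := h1.exp.mul_const r
    exact this
  have h3 := h2.div (h2.sub_const 1) (ne_of_gt hρ1)
  refine (h3 : HasDerivAt (yA ζ r t) _ s).congr_deriv ?_
  simp only [yA, rhoA] at *
  set E := Real.exp ((1 - ζ) * (tauLK ζ t - tauLK ζ s)) with hE
  field_simp
  ring

lemma bern_pow {Y p : ℝ} (hY : 1 < Y) (hp : 2 ≤ p) :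
    Y ^ p ≤ 1 + p * (Y ^ (p - 1) * (Y - 1)) := by
  have hY0 : (0:ℝ) < Y := by linarith
  have hYne : Y ≠ 0 := ne_of_gt hY0
  have hb := one_add_mul_self_le_rpow_one_add (s := 1 / Y - 1)
    (by have : 0 < 1 / Y := by positivity
        linarith) (by linarith : (1:ℝ) ≤ p)
  have h1 : (1 : ℝ) + (1 / Y - 1) = 1 / Y := by ring
  rw [h1] at hb
  have h2 : (1 / Y) ^ p = 1 / Y ^ p := by
    rw [one_div, one_div, Real.inv_rpow hY0.le]
  rw [h2] at hb
  have hYp : 0 < Y ^ p := Real.rpow_pos_of_pos hY0 p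
  have hstep : Y ^ (p - 1) * Y = Y ^ p := by
    rw [← Real.rpow_add_one hYne (p - 1)]; norm_num
  have hA1 : Y ^ (p - 1) = Y ^ p / Y := by
    rw [eq_div_iff hYne]; exact hstep
  rw [hA1]
  have hmul := mul_le_mul_of_nonneg_right hb hYp.le
  have e1 : 1 / Y ^ p * Y ^ p = 1 := by field_simp
  have e2 : (1 + p * (1 / Y - 1)) * Y ^ p
      = Y ^ p + p * (Y ^ p / Y) - p * Y ^ p := by field_simp; ring
  rw [e1, e2] at hmul
  have e3 : Y ^ p / Y * (Y - 1) = Y ^ p - Y ^ p / Y := by field_simp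
  rw [e3]
  linarith

theorem stmt5main (ζ r p t : ℝ) (hζ0 : 0 ≤ ζ) (hζ1 : ζ < 1) (hr : 1 < r) (hp : 2 ≤ p)
    (ht : 0 ≤ t) :
    (∫ s in (0:ℝ)..t, yA ζ r t s ^ p)
      ≤ 2 * (1 + t) / (1 - ζ) * (r / (r - 1)) ^ (p - 1) := by
  have ha : (0:ℝ) < 1 - ζ := by linarith
  have hr1 : (0:ℝ) < r - 1 := by linarith
  have hp1 : (1:ℝ) ≤ p - 1 := by linarith
  set C : ℝ := p * (1 + ζ * t) / ((1 - ζ) * (p - 1)) with hC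
  have hC0 : 0 ≤ C := by
    apply div_nonneg
    · nlinarith [mul_nonneg hζ0 ht]
    · nlinarith
  set D : ℝ → ℝ := fun s => 1 + C * ((1 - ζ) / (1 + ζ * s) * (yA ζ r t s * (yA ζ r t s - 1))
      * (p - 1) * yA ζ r t s ^ (p - 1 - 1)) with hD
  -- F' = D on [0, t]
  have hFd : ∀ s ∈ Set.uIcc (0:ℝ) t,
      HasDerivAt (fun u => u + C * yA ζ r t u ^ (p - 1)) (D s) s := by
    intro s hs
    rw [Set.uIcc_of_le ht] at hs
    have hy1 : 1 < yA ζ r t s := yA_gt ζ r t s hζ0 hζ1 hr hs.1 hs.2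
    have h1 := (yA_deriv ζ r t s hζ0 hζ1 hr hs.1 hs.2).rpow_const (Or.inr hp1)
    exact (hasDerivAt_id s).add (h1.const_mul C)
  -- continuity
  have hycont : ContinuousOn (yA ζ r t) (Set.Icc 0 t) := fun s hs =>
    (yA_deriv ζ r t s hζ0 hζ1 hr hs.1 hs.2).continuousAt.continuousWithinAt
  have hint1 : IntervalIntegrable (fun s => yA ζ r t s ^ p) MeasureTheory.volume 0 t := by
    apply ContinuousOn.intervalIntegrable
    rw [Set.uIcc_of_le ht]
    exact hycont.rpow_const fun x hx => Or.inr (by linarith)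
  have hdenc : ContinuousOn (fun s : ℝ => (1 - ζ) / (1 + ζ * s)) (Set.Icc 0 t) := by
    apply ContinuousOn.div continuousOn_const
    · exact (continuous_const.add (continuous_const.mul continuous_id)).continuousOn
    · intro x hx
      have : (0:ℝ) < 1 + ζ * x := by nlinarith [mul_nonneg hζ0 hx.1]
      exact ne_of_gt this
  have hDcont : ContinuousOn D (Set.Icc 0 t) := by
    apply ContinuousOn.add continuousOn_const
    refine ContinuousOn.mul continuousOn_const ?_
    refine ContinuousOn.mul (ContinuousOn.mul (ContinuousOn.mul hdenc
      (hycont.mul (hycont.sub continuousOn_const))) continuousOn_const) ?_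
    exact hycont.rpow_const fun x hx => Or.inl
      (ne_of_gt (lt_trans one_pos (yA_gt ζ r t x hζ0 hζ1 hr hx.1 hx.2)))
  have hint2 : IntervalIntegrable D MeasureTheory.volume 0 t := by
    apply ContinuousOn.intervalIntegrable
    rwa [Set.uIcc_of_le ht]
  -- FTC
  have hFTC : ∫ s in (0:ℝ)..t, D s
      = (t + C * yA ζ r t t ^ (p - 1)) - (0 + C * yA ζ r t 0 ^ (p - 1)) :=
    intervalIntegral.integral_eq_sub_of_hasDerivAt hFd hint2
  -- pointwise bound
  have hpt : ∀ s ∈ Set.Icc (0:ℝ) t, yA ζ r t s ^ p ≤ D s := by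
    intro s hs
    have hden : (0:ℝ) < 1 + ζ * s := by nlinarith [mul_nonneg hζ0 hs.1]
    have hY : 1 < yA ζ r t s := yA_gt ζ r t s hζ0 hζ1 hr hs.1 hs.2
    set Y := yA ζ r t s with hYdef
    have hYne : Y ≠ 0 := by positivity
    have hG : Y ^ (p - 1 - 1) * Y = Y ^ (p - 1) := by
      rw [← Real.rpow_add_one hYne (p - 1 - 1)]; norm_num
    have hw : p ≤ C * (p - 1) * ((1 - ζ) / (1 + ζ * s)) := by
      have hceq : C * (p - 1) * ((1 - ζ) / (1 + ζ * s)) = p * (1 + ζ * t) / (1 + ζ * s) := by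
        rw [hC]; field_simp
      rw [hceq, le_div_iff₀ hden]
      nlinarith [mul_le_mul_of_nonneg_left hs.2 (mul_nonneg (by linarith : (0:ℝ) ≤ p) hζ0)]
    have hb := bern_pow hY hp
    have hZpos : 0 < Y ^ (p - 1) := Real.rpow_pos_of_pos (by linarith) _
    have e4 : D s = 1 + (C * (p - 1) * ((1 - ζ) / (1 + ζ * s)))
        * (Y ^ (p - 1 - 1) * Y * (Y - 1)) := by rw [hD]; ring
    rw [e4, hG]
    have hmul := mul_le_mul_of_nonneg_right hw
      (mul_nonneg hZpos.le (by linarith : (0:ℝ) ≤ Y - 1))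
    calc Y ^ p ≤ 1 + p * (Y ^ (p - 1) * (Y - 1)) := hb
      _ ≤ 1 + (C * (p - 1) * ((1 - ζ) / (1 + ζ * s))) * (Y ^ (p - 1) * (Y - 1)) := by
          linarith
  -- monotone integral
  have hmono := intervalIntegral.integral_mono_on ht hint1 hint2 hpt
  -- endpoint values
  have hyt : yA ζ r t t = r / (r - 1) := by simp [yA, rhoA]
  have hy0' : 1 ≤ yA ζ r t 0 ^ (p - 1) :=
    Real.one_le_rpow (yA_gt ζ r t 0 hζ0 hζ1 hr le_rfl ht).le (by linarith)
  have hK1 : 1 ≤ (r / (r - 1)) ^ (p - 1) :=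
    Real.one_le_rpow (by rw [le_div_iff₀ hr1]; linarith) (by linarith)
  have hCB : C ≤ 2 * (1 + t) / (1 - ζ) := by
    rw [hC, div_le_div_iff₀ (by positivity) ha]
    have h1 : p * (1 + ζ * t) ≤ 2 * (p - 1) * (1 + t) := by
      nlinarith [mul_nonneg (mul_nonneg (by linarith : (0:ℝ) ≤ p) ht) ha.le,
        mul_nonneg (by linarith : (0:ℝ) ≤ p - 2) ht]
    nlinarith [mul_le_mul_of_nonneg_left h1 ha.le]
  have hb2 : 2 * (1 + t) ≤ 2 * (1 + t) / (1 - ζ) := by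
    rw [le_div_iff₀ ha]; nlinarith
  calc (∫ s in (0:ℝ)..t, yA ζ r t s ^ p) ≤ ∫ s in (0:ℝ)..t, D s := hmono
    _ = (t + C * yA ζ r t t ^ (p - 1)) - (0 + C * yA ζ r t 0 ^ (p - 1)) := hFTC
    _ ≤ 2 * (1 + t) / (1 - ζ) * (r / (r - 1)) ^ (p - 1) := by
        rw [hyt]
        nlinarith [mul_nonneg hC0 (by linarith : (0:ℝ) ≤ yA ζ r t 0 ^ (p - 1) - 1),
          mul_nonneg (sub_nonneg.2 hCB) (sub_nonneg.2 hK1)]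

/-- Push-out estimate, case `ζ ∈ [0,1)`, `p ≥ 2`:
with `r_s = e^{(1-ζ)(τ_t - τ_s)} r`,
`∫₀^t (r_s/(r_s-1))^p ds ≤ (2(1+t)/(1-ζ)) (r/(r-1))^{p-1}`. -/
theorem stmt5 (ζ r p t : ℝ) (hζ0 : 0 ≤ ζ) (hζ1 : ζ < 1) (hr : 1 < r) (hp : 2 ≤ p)
    (ht : 0 ≤ t) :
    (∫ s in (0:ℝ)..t,
        (Real.exp ((1 - ζ) * (tauLK ζ t - tauLK ζ s)) * r /
            (Real.exp ((1 - ζ) * (tauLK ζ t - tauLK ζ s)) * r - 1)) ^ p)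
      ≤ 2 * (1 + t) / (1 - ζ) * (r / (r - 1)) ^ (p - 1) := by
  simpa only [yA, rhoA] using stmt5main ζ r p t hζ0 hζ1 hr hp ht
end

section
/- Let ζ ∈ [0,1), r > 1 and t ≥ 0, and for s ∈ [0,t] set r_s = e^{(1−ζ)(τ_t − τ_s)} r. Then ∫₀^t (r_s/(r_s − 1)) ds ≤ (2(1+t)/(1−ζ)) (1 + log(r/(r−1))). -/
open Complex

lemma tauLK_hasDerivAt (ζ s : ℝ) (h : 0 < 1 + ζ * s) :
    HasDerivAt (tauLK ζ) (1 / (1 + ζ * s)) s := by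
  rcases eq_or_ne ζ 0 with hz | hz
  · have hfun : tauLK ζ = fun x => x := by funext x; simp [tauLK, hz]
    rw [hfun, hz]
    have := hasDerivAt_id' s
    simp only [zero_mul, add_zero, div_one]
    exact this
  · have h1 : HasDerivAt (fun x : ℝ => 1 + ζ * x) ζ s := by
      simpa using ((hasDerivAt_id s).const_mul ζ).const_add 1
    have h2 := (h1.log (ne_of_gt h)).const_mul ζ⁻¹
    have hfun : tauLK ζ = fun x => ζ⁻¹ * Real.log (1 + ζ * x) := by
      funext x; simp [tauLK, hz]
    rw [hfun]
    exact h2.congr_deriv (by field_simp)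

lemma tauLK_mono (ζ : ℝ) (hζ : 0 ≤ ζ) {s t : ℝ} (hs : 0 ≤ s) (hst : s ≤ t) :
    tauLK ζ s ≤ tauLK ζ t := by
  rcases eq_or_ne ζ 0 with hz | hz
  · simp [tauLK, hz, hst]
  · have hζ' : 0 < ζ := lt_of_le_of_ne hζ (Ne.symm hz)
    simp only [tauLK, hz, if_false]
    apply mul_le_mul_of_nonneg_left _ (by positivity)
    apply Real.log_le_log (by nlinarith)
    nlinarith

lemma stmt6_aux (a C L t ζ : ℝ) (ha0 : 0 < a) (hCa : C * a = 1 + ζ * t)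
    (h1 : a ≤ 1) (hζ0 : 0 ≤ ζ) (hζ1 : ζ < 1) (ht : 0 ≤ t) (hL0 : 0 ≤ L) :
    t + C * L ≤ 2 * (1 + t) / a * (1 + L) := by
  have h2 : ζ * t ≤ t := by nlinarith
  have key : (t + C * L) * a ≤ 2 * (1 + t) * (1 + L) := by
    nlinarith [mul_nonneg hL0 (show (0:ℝ) ≤ t - ζ * t by nlinarith),
      mul_nonneg ht (show (0:ℝ) ≤ 1 - a by linarith), hL0, ht]
  calc t + C * L ≤ 2 * (1 + t) * (1 + L) / a := (le_div_iff₀ ha0).mpr key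
    _ = 2 * (1 + t) / a * (1 + L) := by ring

/-- Push-out estimate, case `ζ ∈ [0,1)`, `p = 1`:
with `r_s = e^{(1-ζ)(τ_t - τ_s)} r`,
`∫₀^t (r_s/(r_s-1)) ds ≤ (2(1+t)/(1-ζ)) (1 + log(r/(r-1)))`. -/
theorem stmt6 (ζ r t : ℝ) (hζ0 : 0 ≤ ζ) (hζ1 : ζ < 1) (hr : 1 < r) (ht : 0 ≤ t) :
    (∫ s in (0:ℝ)..t,
        Real.exp ((1 - ζ) * (tauLK ζ t - tauLK ζ s)) * r /
          (Real.exp ((1 - ζ) * (tauLK ζ t - tauLK ζ s)) * r - 1))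
      ≤ 2 * (1 + t) / (1 - ζ) * (1 + Real.log (r / (r - 1))) := by
  set a : ℝ := 1 - ζ with ha
  have ha0 : 0 < a := by rw [ha]; linarith
  have hr1 : 0 < r - 1 := by linarith
  set u : ℝ → ℝ := fun s => Real.exp (-(a * (tauLK ζ t - tauLK ζ s))) with hu
  set C : ℝ := (1 + ζ * t) / a with hC
  have h1ζt : 0 < 1 + ζ * t := by nlinarith
  have hC0 : 0 < C := by positivity
  set F : ℝ → ℝ := fun s => s - C * Real.log (r - u s) with hF
  set F' : ℝ → ℝ := fun s => 1 + C * (a / (1 + ζ * s) * u s / (r - u s)) with hF'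
  have hbase : ∀ s ∈ Set.Icc (0:ℝ) t, 0 < 1 + ζ * s := by
    intro s hs; nlinarith [hs.1]
  have hτle : ∀ s ∈ Set.Icc (0:ℝ) t, tauLK ζ s ≤ tauLK ζ t := by
    intro s hs; exact tauLK_mono ζ hζ0 hs.1 hs.2
  have hupos : ∀ s, 0 < u s := fun s => Real.exp_pos _
  have hule : ∀ s ∈ Set.Icc (0:ℝ) t, u s ≤ 1 := by
    intro s hs
    rw [hu]
    simp only
    rw [Real.exp_le_one_iff]
    have := hτle s hs
    nlinarith
  have hden : ∀ s ∈ Set.Icc (0:ℝ) t, 0 < r - u s := by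
    intro s hs; have := hule s hs; linarith
  have huderiv : ∀ s ∈ Set.Icc (0:ℝ) t, HasDerivAt u (a / (1 + ζ * s) * u s) s := by
    intro s hs
    have h1 := tauLK_hasDerivAt ζ s (hbase s hs)
    have h2 : HasDerivAt (fun x => -(a * (tauLK ζ t - tauLK ζ x))) (a * (1 / (1 + ζ * s))) s := by
      have := (((h1.const_sub (tauLK ζ t)).const_mul a).neg)
      exact this.congr_deriv (by ring)
    have h3 := h2.exp
    convert h3 using 1
    rw [hu]; ring
  have hFderiv : ∀ s ∈ Set.Icc (0:ℝ) t, HasDerivAt F (F' s) s := by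
    intro s hs
    have hu' := huderiv s hs
    have hlog := ((hu'.const_sub r).log (ne_of_gt (hden s hs))).const_mul C
    have h4 := (hasDerivAt_id s).sub hlog
    refine (show HasDerivAt F _ s from h4).congr_deriv ?_
    rw [hF']
    beta_reduce
    ring
  have hτcont : ContinuousOn (tauLK ζ) (Set.Icc 0 t) := fun s hs =>
    ((tauLK_hasDerivAt ζ s (hbase s hs)).continuousAt).continuousWithinAt
  have hucont : ContinuousOn u (Set.Icc 0 t) :=
    Real.continuous_exp.comp_continuousOn
      ((continuousOn_const.mul (continuousOn_const.sub hτcont)).neg)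
  have hEcont : ContinuousOn (fun s => Real.exp ((1 - ζ) * (tauLK ζ t - tauLK ζ s)))
      (Set.Icc 0 t) :=
    Real.continuous_exp.comp_continuousOn
      (continuousOn_const.mul (continuousOn_const.sub hτcont))
  have hE1 : ∀ s ∈ Set.Icc (0:ℝ) t, 1 ≤ Real.exp ((1 - ζ) * (tauLK ζ t - tauLK ζ s)) := by
    intro s hs
    have := hτle s hs
    apply Real.one_le_exp
    nlinarith
  have hEu : ∀ s, Real.exp ((1 - ζ) * (tauLK ζ t - tauLK ζ s)) * u s = 1 := by
    intro s
    rw [hu]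
    simp only
    rw [← Real.exp_add, ← ha]
    ring_nf
    exact Real.exp_zero
  have hicc : Set.uIcc (0:ℝ) t = Set.Icc 0 t := Set.uIcc_of_le ht
  have hfint : IntervalIntegrable (fun s =>
      Real.exp ((1 - ζ) * (tauLK ζ t - tauLK ζ s)) * r /
        (Real.exp ((1 - ζ) * (tauLK ζ t - tauLK ζ s)) * r - 1)) MeasureTheory.volume 0 t := by
    apply ContinuousOn.intervalIntegrable
    rw [hicc]
    apply ContinuousOn.div ((hEcont.mul continuousOn_const))
      ((hEcont.mul continuousOn_const).sub continuousOn_const)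
    intro s hs
    have := hE1 s hs
    simp only [Pi.sub_apply, Pi.mul_apply]
    nlinarith
  have hF'int : IntervalIntegrable F' MeasureTheory.volume 0 t := by
    apply ContinuousOn.intervalIntegrable
    rw [hicc, hF']
    apply continuousOn_const.add (continuousOn_const.mul (ContinuousOn.div _ _ _))
    · exact (continuousOn_const.div (continuousOn_const.add
        (continuousOn_const.mul continuousOn_id)) (fun s hs => ne_of_gt (hbase s hs))).mul hucont
    · exact continuousOn_const.sub hucont
    · exact fun s hs => ne_of_gt (hden s hs)
  have hmono : (∫ s in (0:ℝ)..t,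
        Real.exp ((1 - ζ) * (tauLK ζ t - tauLK ζ s)) * r /
          (Real.exp ((1 - ζ) * (tauLK ζ t - tauLK ζ s)) * r - 1))
      ≤ ∫ s in (0:ℝ)..t, F' s := by
    apply intervalIntegral.integral_mono_on ht hfint hF'int
    intro s hs
    have hEu' := hEu s
    have hd := hden s hs
    have hb := hbase s hs
    have hu0 := hupos s
    set E := Real.exp ((1 - ζ) * (tauLK ζ t - tauLK ζ s)) with hE
    have hE0 : 0 < E := Real.exp_pos _
    have hEr : 0 < E * r - 1 := by nlinarith [hE1 s hs]
    have heq : E * r / (E * r - 1) = r / (r - u s) := by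
      rw [div_eq_div_iff (by linarith) (by linarith)]
      nlinarith
    rw [heq, hF']
    have hsplit : r / (r - u s) = 1 + u s / (r - u s) := by
      field_simp
      ring
    rw [hsplit]
    have hcoef : 1 ≤ C * (a / (1 + ζ * s)) := by
      rw [hC]
      rw [div_mul_div_comm, le_div_iff₀ (by positivity)]
      have : ζ * s ≤ ζ * t := by
        apply mul_le_mul_of_nonneg_left hs.2 hζ0
      nlinarith
    have hfrac : 0 ≤ u s / (r - u s) := by positivity
    calc 1 + u s / (r - u s) ≤ 1 + (C * (a / (1 + ζ * s))) * (u s / (r - u s)) := by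
          nlinarith
      _ = 1 + C * (a / (1 + ζ * s) * u s / (r - u s)) := by ring
  have hFTC : (∫ s in (0:ℝ)..t, F' s) = F t - F 0 := by
    apply intervalIntegral.integral_eq_sub_of_hasDerivAt
    · intro s hs
      rw [hicc] at hs
      exact hFderiv s hs
    · exact hF'int
  have hut : u t = 1 := by
    rw [hu]; simp
  have hu0t : u 0 ≤ 1 := hule 0 ⟨le_refl 0, ht⟩
  have hu00 : 0 < u 0 := hupos 0
  have hlogle : Real.log (r - u 0) ≤ Real.log r := by
    apply Real.log_le_log (by linarith)
    linarith
  set L : ℝ := Real.log (r / (r - 1)) with hL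
  have hLeq : L = Real.log r - Real.log (r - 1) := by
    rw [hL, Real.log_div (by linarith) (by linarith)]
  have hL0 : 0 ≤ L := by
    apply Real.log_nonneg
    rw [le_div_iff₀ hr1]
    linarith
  have hFt : F t - F 0 ≤ t + C * L := by
    rw [hF]
    simp only [hut]
    rw [hLeq]
    nlinarith [hlogle]
  have hfinal : t + C * L ≤ 2 * (1 + t) / a * (1 + L) := by
    apply stmt6_aux a C L t ζ ha0 _ (by rw [ha]; linarith) hζ0 hζ1 ht hL0
    rw [hC]; field_simp
  calc (∫ s in (0:ℝ)..t,
        Real.exp ((1 - ζ) * (tauLK ζ t - tauLK ζ s)) * r /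
          (Real.exp ((1 - ζ) * (tauLK ζ t - tauLK ζ s)) * r - 1))
      ≤ ∫ s in (0:ℝ)..t, F' s := hmono
    _ = F t - F 0 := hFTC
    _ ≤ t + C * L := hFt
    _ ≤ 2 * (1 + t) / a * (1 + L) := hfinal
    _ = 2 * (1 + t) / (1 - ζ) * (1 + Real.log (r / (r - 1))) := by rw [ha, hL]
end

section
/- Let ζ < 0, r > 1 and t ∈ [0, t_ζ), and for s ∈ [0,t] set r_s = e^{τ_t − τ_s} r. Then for every p ≥ 2, ∫₀^t (r_s/(r_s − 1))^p ds ≤ 2(1+t) (r/(r−1))^{p−1}, and moreover ∫₀^t (r_s/(r_s − 1)) ds ≤ 2(1+t)(1 + log(r/(r−1))). -/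
open Complex

open Set intervalIntegral in
lemma aux_exp (ζ t s : ℝ) (hζ : ζ < 0) (hs0 : 0 ≤ s) (hst : s ≤ t) (ht : t < |ζ|⁻¹) :
    1 + (t - s) ≤ Real.exp (tauLK ζ t - tauLK ζ s) := by
  have hζ0 : ζ ≠ 0 := ne_of_lt hζ
  have hnz : (0:ℝ) < -ζ := neg_pos.2 hζ
  have h1t : 0 < 1 + ζ * t := by
    have h := mul_lt_mul_of_pos_right ht hnz
    rw [abs_of_neg hζ, inv_mul_cancel₀ (ne_of_gt hnz)] at h
    nlinarith
  have h1s : 0 < 1 + ζ * s := by nlinarith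
  have h1s1 : 1 + ζ * s ≤ 1 := by nlinarith
  have key : t - s ≤ tauLK ζ t - tauLK ζ s := by
    simp only [tauLK, if_neg hζ0]
    rw [← mul_sub]
    have hD : Real.log (1 + ζ * t) - Real.log (1 + ζ * s) ≤ ζ * (t - s) := by
      rw [← Real.log_div (ne_of_gt h1t) (ne_of_gt h1s)]
      have hlog := Real.log_le_sub_one_of_pos (div_pos h1t h1s)
      have heq : (1 + ζ * t) / (1 + ζ * s) - 1 = ζ * (t - s) / (1 + ζ * s) := by
        field_simp
        ring
      rw [heq] at hlog
      have hdiv : ζ * (t - s) / (1 + ζ * s) ≤ ζ * (t - s) := by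
        rw [div_le_iff₀ h1s]
        nlinarith [mul_nonneg (mul_nonneg (sq_nonneg ζ) hs0) (sub_nonneg.2 hst)]
      linarith
    have h2 := mul_le_mul_of_nonpos_left hD (le_of_lt (inv_neg''.mpr hζ))
    rw [← mul_assoc, inv_mul_cancel₀ hζ0, one_mul] at h2
    linarith
  have := Real.add_one_le_exp (tauLK ζ t - tauLK ζ s)
  linarith

open Set intervalIntegral in
set_option maxHeartbeats 1000000 in
lemma aux_main (t r : ℝ) (f : ℝ → ℝ) (ht0 : 0 ≤ t) (hr : 1 < r)
    (hfc : ContinuousOn f (Set.Icc 0 t))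
    (hf1 : ∀ s ∈ Set.Icc 0 t, 1 ≤ f s)
    (hfb : ∀ s ∈ Set.Icc 0 t, f s ≤ 1 + ((r - 1) + (t - s) * r)⁻¹) :
    (∀ p : ℝ, 2 ≤ p →
      (∫ s in (0:ℝ)..t, f s ^ p) ≤ 2 * (1 + t) * (r / (r - 1)) ^ (p - 1)) ∧
    (∫ s in (0:ℝ)..t, f s) ≤ 2 * (1 + t) * (1 + Real.log (r / (r - 1))) := by
  have hr0 : (0:ℝ) < r := by linarith
  have hrne : r ≠ 0 := ne_of_gt hr0
  set c := r - 1 with hc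
  have hc0 : (0:ℝ) < c := by rw [hc]; linarith
  set m := r / (r - 1) with hm
  have hm1 : (1:ℝ) < m := by rw [hm]; rw [lt_div_iff₀ (by linarith : (0:ℝ) < r - 1)]; linarith
  have hm0 : (0:ℝ) < m := by linarith
  have hlogm : (0:ℝ) ≤ Real.log m := Real.log_nonneg hm1.le
  have hcm : c * m = r := by rw [hm, hc]; field_simp; exact div_self (by linarith)
  have hmeq : (1:ℝ) + c⁻¹ = m := by
    rw [hm, hc]
    field_simp
    rw [eq_div_iff (by linarith : r - 1 ≠ 0), add_mul, one_div, inv_mul_cancel₀ (by linarith : r - 1 ≠ 0)]; ring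
  have huI : Set.uIcc (0:ℝ) t = Set.Icc 0 t := Set.uIcc_of_le ht0
  have hu_pos : ∀ s ∈ Set.Icc (0:ℝ) t, 0 < c + (t - s) * r := by
    intro s hs
    have := hs.2
    nlinarith [hs.1, hs.2]
  -- g
  set g : ℝ → ℝ := fun s => 1 + (c + (t - s) * r)⁻¹ with hg
  have hucont : ContinuousOn (fun s : ℝ => c + (t - s) * r) (Set.Icc 0 t) :=
    (continuous_const.add (((continuous_const.sub continuous_id).mul continuous_const))).continuousOn
  have hgc : ContinuousOn g (Set.Icc 0 t) :=
    continuousOn_const.add (hucont.inv₀ fun s hs => ne_of_gt (hu_pos s hs))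
  -- integrability
  have hfi : IntervalIntegrable f MeasureTheory.volume 0 t :=
    (huI ▸ hfc).intervalIntegrable
  have hgi : IntervalIntegrable g MeasureTheory.volume 0 t :=
    (huI ▸ hgc).intervalIntegrable
  have hg2i : IntervalIntegrable (fun s => (g s) ^ 2) MeasureTheory.volume 0 t :=
    (huI ▸ (hgc.pow 2)).intervalIntegrable
  -- f ≤ m pointwise
  have hfm : ∀ s ∈ Set.Icc (0:ℝ) t, f s ≤ m := by
    intro s hs
    have h1 := hfb s hs
    have h2 : (c + (t - s) * r)⁻¹ ≤ c⁻¹ := by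
      apply inv_anti₀ hc0
      nlinarith [hs.1, hs.2]
    linarith [hmeq]
  -- derivative of u
  have hu' : ∀ s : ℝ, HasDerivAt (fun x : ℝ => c + (t - x) * r) (-r) s := by
    intro s
    have h : HasDerivAt (fun x : ℝ => c + (t - x) * r) (0 + (0 - 1) * r) s :=
      (hasDerivAt_const s c).add (((hasDerivAt_const s t).sub (hasDerivAt_id s)).mul_const r)
    simpa using h
  -- FTC for g
  have hder2 : ∀ s ∈ Set.uIcc (0:ℝ) t,
      HasDerivAt (fun x => x - (1 / r) * Real.log (c + (t - x) * r)) (g s) s := by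
    intro s hs
    rw [huI] at hs
    have hune : c + (t - s) * r ≠ 0 := ne_of_gt (hu_pos s hs)
    have hlog : HasDerivAt (fun x => Real.log (c + (t - x) * r))
        (-r / (c + (t - s) * r)) s := (hu' s).log hune
    have h := (hasDerivAt_id s).sub (hlog.const_mul (1 / r))
    refine h.congr_deriv (Eq.symm ?_)
    rw [hg]
    field_simp
    ring
  have hint2 : (∫ s in (0:ℝ)..t, g s)
      = t + (1 / r) * (Real.log (c + t * r) - Real.log c) := by
    rw [integral_eq_sub_of_hasDerivAt hder2 hgi]
    norm_num
    ring
  -- FTC for g^2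
  have hder1 : ∀ s ∈ Set.uIcc (0:ℝ) t,
      HasDerivAt (fun x => x - (2 / r) * Real.log (c + (t - x) * r)
        + (1 / r) * (c + (t - x) * r)⁻¹) ((g s) ^ 2) s := by
    intro s hs
    rw [huI] at hs
    have hupos := hu_pos s hs
    have hune : c + (t - s) * r ≠ 0 := ne_of_gt hupos
    have hlog : HasDerivAt (fun x => Real.log (c + (t - x) * r))
        (-r / (c + (t - s) * r)) s := (hu' s).log hune
    have hinv : HasDerivAt (fun x => (c + (t - x) * r)⁻¹)
        (-(-r) / (c + (t - s) * r) ^ 2) s := (hu' s).inv hune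
    have h := ((hasDerivAt_id s).sub (hlog.const_mul (2 / r))).add (hinv.const_mul (1 / r))
    refine h.congr_deriv (Eq.symm ?_)
    rw [hg]
    field_simp
    ring
  have hint1 : (∫ s in (0:ℝ)..t, (g s) ^ 2)
      = t + (2 / r) * (Real.log (c + t * r) - Real.log c)
        + (1 / r) * (c⁻¹ - (c + t * r)⁻¹) := by
    rw [integral_eq_sub_of_hasDerivAt hder1 hg2i]
    norm_num
    ring
  -- bounds on L
  set L := Real.log (c + t * r) - Real.log c with hL
  have hctr : c < c + t * r ∨ c = c + t * r := by
    rcases lt_or_eq_of_le (by nlinarith : c ≤ c + t * r) with h | h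
    · exact Or.inl h
    · exact Or.inr h
  have hL0 : 0 ≤ L := by
    rw [hL]
    have := Real.log_le_log hc0 (by nlinarith : c ≤ c + t * r)
    linarith
  have hLeq : L = Real.log (1 + t * m) := by
    rw [hL]
    have h1 : c + t * r = c * (1 + t * m) := by
      have : c * (1 + t * m) = c + t * (c * m) := by ring
      rw [this, hcm]
    rw [h1, Real.log_mul (ne_of_gt hc0) (by nlinarith : (1:ℝ) + t * m ≠ 0)]
    ring
  have htm0 : (0:ℝ) < 1 + t * m := by nlinarith
  have hLb : L ≤ t + Real.log 2 + Real.log m := by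
    rw [hLeq]
    have h1 : (1:ℝ) + t * m ≤ (1 + t) * (2 * m) := by nlinarith
    have h2 := Real.log_le_log htm0 h1
    have h3 : Real.log ((1 + t) * (2 * m)) = Real.log (1 + t) + Real.log 2 + Real.log m := by
      rw [Real.log_mul (by linarith : (1:ℝ) + t ≠ 0) (by linarith : 2 * m ≠ 0),
        Real.log_mul (by norm_num : (2:ℝ) ≠ 0) (ne_of_gt hm0)]
      ring
    have h4 : Real.log (1 + t) ≤ t := by
      have := Real.log_le_sub_one_of_pos (by linarith : (0:ℝ) < 1 + t)
      linarith
    rw [h3] at h2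
    linarith
  have hrinvL : (1 / r) * L ≤ L := by
    have : (1:ℝ) / r ≤ 1 := by rw [div_le_one hr0]; linarith
    nlinarith
  have hlog2 : Real.log 2 ≤ 1 := by
    have := Real.log_le_sub_one_of_pos (by norm_num : (0:ℝ) < 2)
    linarith
  constructor
  · -- the p case
    intro p hp
    -- pointwise bound
    have hpt : ∀ s ∈ Set.Icc (0:ℝ) t, f s ^ p ≤ m ^ (p - 2) * (g s) ^ 2 := by
      intro s hs
      have hf0 : (0:ℝ) < f s := lt_of_lt_of_le one_pos (hf1 s hs)
      have e1 : f s ^ p = f s ^ (p - 2) * f s ^ (2:ℕ) := by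
        rw [← Real.rpow_natCast (f s) 2, ← Real.rpow_add hf0]
        norm_num
      rw [e1]
      have h2 : f s ^ (p - 2) ≤ m ^ (p - 2) :=
        Real.rpow_le_rpow hf0.le (hfm s hs) (by linarith)
      have h3 : f s ^ (2:ℕ) ≤ (g s) ^ 2 :=
        pow_le_pow_left₀ hf0.le (hfb s hs) 2
      have h4 : (0:ℝ) ≤ f s ^ (2:ℕ) := by positivity
      have h5 : (0:ℝ) ≤ m ^ (p - 2) := Real.rpow_nonneg hm0.le _
      exact mul_le_mul h2 h3 h4 h5
    have hfpi : IntervalIntegrable (fun s => f s ^ p) MeasureTheory.volume 0 t := by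
      apply ContinuousOn.intervalIntegrable
      rw [huI]
      exact hfc.rpow_const fun s hs => Or.inr (by linarith)
    have hgmi : IntervalIntegrable (fun s => m ^ (p - 2) * (g s) ^ 2)
        MeasureTheory.volume 0 t := hg2i.const_mul _
    have h6 : (∫ s in (0:ℝ)..t, f s ^ p) ≤ ∫ s in (0:ℝ)..t, m ^ (p - 2) * (g s) ^ 2 :=
      integral_mono_on ht0 hfpi hgmi hpt
    rw [integral_const_mul, hint1] at h6
    -- bound S
    have h2L : 2 * L ≤ 1 + t * m := by
      rw [hLeq]
      have hy : (0:ℝ) ≤ 1 + t * m := htm0.le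
      have hs1 := Real.sq_sqrt hy
      have hls : Real.log (Real.sqrt (1 + t * m)) = Real.log (1 + t * m) / 2 :=
        Real.log_sqrt hy
      have hsp : (0:ℝ) < Real.sqrt (1 + t * m) := Real.sqrt_pos.2 htm0
      have hlb := Real.log_le_sub_one_of_pos hsp
      have ha : Real.log (1 + t * m) ≤ 2 * Real.sqrt (1 + t * m) - 2 := by linarith
      have hb : 4 * Real.sqrt (1 + t * m) - 4 ≤ 1 + t * m := by
        nlinarith [sq_nonneg (Real.sqrt (1 + t * m) - 2)]
      linarith
    have hcinv : c⁻¹ ≤ m := by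
      have : c⁻¹ ≤ 1 + c⁻¹ := by linarith
      linarith [hmeq]
    have hinvpos : (0:ℝ) ≤ (c + t * r)⁻¹ := by positivity
    have h2rL : (2 / r) * L ≤ 2 * L := by
      have : (2:ℝ) / r ≤ 2 := by rw [div_le_iff₀ hr0]; nlinarith
      nlinarith
    have hlast : (1 / r) * (c⁻¹ - (c + t * r)⁻¹) ≤ m := by
      have h7 : c⁻¹ - (c + t * r)⁻¹ ≤ c⁻¹ := by linarith
      have h8 : (0:ℝ) ≤ c⁻¹ - (c + t * r)⁻¹ := by
        have : (c + t * r)⁻¹ ≤ c⁻¹ := inv_anti₀ hc0 (by nlinarith)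
        linarith
      have h9 : (1:ℝ) / r ≤ 1 := by rw [div_le_one hr0]; linarith
      nlinarith
    have hS : t + (2 / r) * L + (1 / r) * (c⁻¹ - (c + t * r)⁻¹) ≤ 2 * (1 + t) * m := by
      have hprod : (0:ℝ) ≤ (m - 1) * (1 + t) := mul_nonneg (by linarith) (by linarith)
      nlinarith [h2L, h2rL, hlast]
    have h10 : (0:ℝ) ≤ m ^ (p - 2) := Real.rpow_nonneg hm0.le _
    have h11 : m ^ (p - 2) * (t + (2 / r) * L + (1 / r) * (c⁻¹ - (c + t * r)⁻¹))
        ≤ m ^ (p - 2) * (2 * (1 + t) * m) := mul_le_mul_of_nonneg_left hS h10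
    have h12 : m ^ (p - 2) * (2 * (1 + t) * m) = 2 * (1 + t) * m ^ (p - 1) := by
      rw [show p - 1 = p - 2 + 1 by ring, Real.rpow_add_one (ne_of_gt hm0)]
      ring
    calc (∫ s in (0:ℝ)..t, f s ^ p)
        ≤ m ^ (p - 2) * (t + (2 / r) * L + (1 / r) * (c⁻¹ - (c + t * r)⁻¹)) := h6
      _ ≤ m ^ (p - 2) * (2 * (1 + t) * m) := h11
      _ = 2 * (1 + t) * m ^ (p - 1) := h12
  · -- the p = 1 case
    have h6 : (∫ s in (0:ℝ)..t, f s) ≤ ∫ s in (0:ℝ)..t, g s :=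
      integral_mono_on ht0 hfi hgi hfb
    rw [hint2] at h6
    have hprod : (0:ℝ) ≤ t * Real.log m := mul_nonneg ht0 hlogm
    nlinarith [hrinvL, hLb, hlog2, hL0]

/-- Push-out estimate, case `ζ < 0`, `t < t_ζ = |ζ|⁻¹`: with `r_s = e^{τ_t - τ_s} r`,
`∫₀^t (r_s/(r_s-1))^p ds ≤ 2(1+t)(r/(r-1))^{p-1}` for every `p ≥ 2`, and
`∫₀^t (r_s/(r_s-1)) ds ≤ 2(1+t)(1 + log(r/(r-1)))`. -/
theorem stmt7 (ζ r t : ℝ) (hζ : ζ < 0) (hr : 1 < r) (ht0 : 0 ≤ t) (ht : t < |ζ|⁻¹) :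
    (∀ p : ℝ, 2 ≤ p →
      (∫ s in (0:ℝ)..t,
          (Real.exp (tauLK ζ t - tauLK ζ s) * r /
              (Real.exp (tauLK ζ t - tauLK ζ s) * r - 1)) ^ p)
        ≤ 2 * (1 + t) * (r / (r - 1)) ^ (p - 1)) ∧
    (∫ s in (0:ℝ)..t,
        Real.exp (tauLK ζ t - tauLK ζ s) * r /
          (Real.exp (tauLK ζ t - tauLK ζ s) * r - 1))
      ≤ 2 * (1 + t) * (1 + Real.log (r / (r - 1))) := by
  have hζ0 : ζ ≠ 0 := ne_of_lt hζ
  have hr0 : (0:ℝ) < r := by linarith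
  have hnz : (0:ℝ) < -ζ := neg_pos.2 hζ
  have h1t : 0 < 1 + ζ * t := by
    have h := mul_lt_mul_of_pos_right ht hnz
    rw [abs_of_neg hζ, inv_mul_cancel₀ (ne_of_gt hnz)] at h
    nlinarith
  have h1s : ∀ s ∈ Set.Icc (0:ℝ) t, 0 < 1 + ζ * s := by
    intro s hs
    nlinarith [hs.1, hs.2]
  have hE : ∀ s ∈ Set.Icc (0:ℝ) t,
      1 + (t - s) ≤ Real.exp (tauLK ζ t - tauLK ζ s) := fun s hs =>
    aux_exp ζ t s hζ hs.1 hs.2 ht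
  have hden : ∀ s ∈ Set.Icc (0:ℝ) t, 0 < Real.exp (tauLK ζ t - tauLK ζ s) * r - 1 := by
    intro s hs
    have h1 := hE s hs
    have h2 := hs.2
    nlinarith [mul_le_mul_of_nonneg_right h1 hr0.le]
  have hf1 : ∀ s ∈ Set.Icc (0:ℝ) t,
      1 ≤ Real.exp (tauLK ζ t - tauLK ζ s) * r /
        (Real.exp (tauLK ζ t - tauLK ζ s) * r - 1) := by
    intro s hs
    rw [le_div_iff₀ (hden s hs)]
    nlinarith [hden s hs]
  have hfb : ∀ s ∈ Set.Icc (0:ℝ) t,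
      Real.exp (tauLK ζ t - tauLK ζ s) * r /
          (Real.exp (tauLK ζ t - tauLK ζ s) * r - 1)
        ≤ 1 + ((r - 1) + (t - s) * r)⁻¹ := by
    intro s hs
    have hd := hden s hs
    have hupos : (0:ℝ) < (r - 1) + (t - s) * r := by nlinarith [hs.1, hs.2]
    have hA : (r - 1) + (t - s) * r ≤ Real.exp (tauLK ζ t - tauLK ζ s) * r - 1 := by
      nlinarith [mul_le_mul_of_nonneg_right (hE s hs) hr0.le]
    have heq : Real.exp (tauLK ζ t - tauLK ζ s) * r /
        (Real.exp (tauLK ζ t - tauLK ζ s) * r - 1)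
        = 1 + (Real.exp (tauLK ζ t - tauLK ζ s) * r - 1)⁻¹ := by
      field_simp
      ring
    rw [heq]
    have := inv_anti₀ hupos hA
    linarith
  have hcont : ContinuousOn
      (fun s => Real.exp (tauLK ζ t - tauLK ζ s) * r /
        (Real.exp (tauLK ζ t - tauLK ζ s) * r - 1)) (Set.Icc 0 t) := by
    have htau : ContinuousOn (fun s : ℝ => tauLK ζ s) (Set.Icc 0 t) := by
      simp only [tauLK, if_neg hζ0]
      exact continuousOn_const.mul (ContinuousOn.log
        ((continuous_const.add (continuous_const.mul continuous_id)).continuousOn)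
        (fun s hs => ne_of_gt (h1s s hs)))
    have hEc : ContinuousOn (fun s : ℝ => Real.exp (tauLK ζ t - tauLK ζ s))
        (Set.Icc 0 t) := Real.continuous_exp.comp_continuousOn
      (continuousOn_const.sub htau)
    exact (hEc.mul continuousOn_const).div
      ((hEc.mul continuousOn_const).sub continuousOn_const)
      (fun s hs => ne_of_gt (hden s hs))
  exact aux_main t r _ ht0 hr hcont hf1 hfb
end

section
/- For all ζ ∈ ℝ and T ∈ [0, t_ζ) there is a constant C(ζ,T) < ∞ with the following property. Let σ > 0, δ₀ ∈ (0,1/2], t ∈ [0,T], τ ≥ 0 and φ̂ ∈ S₁; write ψ̂(z) = φ̂(z) − z and ψ^cap = τ − τ_t, and suppose |ψ^cap| ≤ δ₀ and |ψ̂′(e^{σ} e^{iθ})| ≤ δ₀ for all θ ∈ [0,2π). Then |(1/2π) ∫₀^{2π} e^{−ζτ} |φ̂′(e^{σ} e^{iθ})|^{−ζ} dθ − e^{−ζτ_t} + ζ e^{−ζτ_t} ψ^cap| ≤ C δ₀². -/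
open Complex

section Helpers


lemma abs_one_add_sub_one_sub_re (w : ℂ) :
    |‖1 + w‖ - 1 - w.re| ≤ 2 * ‖w‖ ^ 2 := by
  set a := ‖1 + w‖ with hadef
  have ha0 : 0 ≤ a := norm_nonneg _
  have hsq : a ^ 2 = 1 + 2 * w.re + ‖w‖ ^ 2 := by
    rw [hadef, Complex.sq_norm, Complex.sq_norm, Complex.normSq_add]
    simp [Complex.normSq_one, Complex.conj_re]
    ring
  have h1 : |a - 1| ≤ ‖w‖ := by
    have := abs_norm_sub_norm_le (1 + w) 1
    simpa using this
  have h2 : |w.re| ≤ ‖w‖ := Complex.abs_re_le_norm w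
  have key : (a - 1 - w.re) * (a + 1) = w.re * (1 - a) + ‖w‖ ^ 2 := by
    linear_combination hsq
  have h3 : |a - 1 - w.re| ≤ |a - 1 - w.re| * (a + 1) :=
    le_mul_of_one_le_right (abs_nonneg _) (by linarith)
  have h4 : |a - 1 - w.re| * (a + 1) = |w.re * (1 - a) + ‖w‖ ^ 2| := by
    rw [← _root_.abs_of_nonneg (by linarith : (0:ℝ) ≤ a + 1), ← abs_mul, key]
  have h5 : |w.re * (1 - a) + ‖w‖ ^ 2| ≤ 2 * ‖w‖ ^ 2 := by
    have h6 : |w.re * (1 - a)| ≤ ‖w‖ ^ 2 := by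
      rw [abs_mul, abs_sub_comm 1 a]
      calc |w.re| * |a - 1| ≤ ‖w‖ * ‖w‖ :=
            mul_le_mul h2 h1 (abs_nonneg _) (norm_nonneg _)
        _ = ‖w‖ ^ 2 := (sq (‖w‖)).symm
    calc |w.re * (1 - a) + ‖w‖ ^ 2|
        ≤ |w.re * (1 - a)| + |‖w‖ ^ 2| := abs_add_le _ _
      _ ≤ ‖w‖ ^ 2 + ‖w‖ ^ 2 := by
          rw [_root_.abs_of_nonneg (by positivity : (0:ℝ) ≤ ‖w‖ ^ 2)]
          linarith
      _ = 2 * ‖w‖ ^ 2 := by ring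
  linarith [h3.trans (h4 ▸ h5)]

lemma log_est {a δ : ℝ} (hδ : δ ≤ 1/4) (hδ0 : 0 ≤ δ) (ha : |a - 1| ≤ δ) :
    |Real.log a| ≤ 2 * δ ∧ |Real.log a - (a - 1)| ≤ 2 * δ ^ 2 := by
  have hx : |1 - a| ≤ δ := by rwa [abs_sub_comm]
  have hx1 : |1 - a| < 1 := by linarith
  have hden : (3:ℝ)/4 ≤ 1 - |1 - a| := by linarith
  have h0 := Real.abs_log_sub_add_sum_range_le hx1 0
  have h1 := Real.abs_log_sub_add_sum_range_le hx1 1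
  simp only [Finset.range_zero, Finset.sum_empty, zero_add, pow_one] at h0
  simp only [Finset.range_one, Finset.sum_singleton, pow_one] at h1
  norm_num at h1
  have hsq : (1 - a) ^ 2 = |1 - a| ^ 2 := (_root_.sq_abs (1 - a)).symm
  have hgoal0 : |1 - a| / (1 - |1 - a|) ≤ 2 * δ := by
    have : |1 - a| / (1 - |1 - a|) ≤ δ / (3/4) :=
      div_le_div₀ hδ0 hx (by norm_num) hden
    linarith
  have hgoal1 : (1 - a) ^ 2 / (1 - |1 - a|) ≤ 2 * δ ^ 2 := by
    have h2 : (1 - a) ^ 2 ≤ δ ^ 2 := by nlinarith [abs_nonneg (1 - a)]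
    have : (1 - a) ^ 2 / (1 - |1 - a|) ≤ δ ^ 2 / (3/4) :=
      div_le_div₀ (by positivity) h2 (by norm_num) hden
    linarith [sq_nonneg δ]
  constructor
  · have heq : Real.log (1 - (1 - a)) = Real.log a := by norm_num
    rw [← heq]
    exact le_trans h0 hgoal0
  · have heq : |Real.log a - (a - 1)| = |1 - a + Real.log a| := by
      rw [show Real.log a - (a - 1) = 1 - a + Real.log a by ring]
    rw [heq]
    exact le_trans h1 hgoal1

open Metric Set in

lemma meanZero {φ : ℂ → ℂ} {ψc : ℕ → ℂ}
    (hφ : DifferentiableOn ℂ φ {z : ℂ | 1 < ‖z‖})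
    (hsum : ∀ z : ℂ, 1 < ‖z‖ → HasSum (fun k : ℕ => ψc k / z ^ k) (φ z - z))
    {r : ℝ} (hr : 1 < r) :
    (∫ θ in (0:ℝ)..(2 * Real.pi), (deriv φ (circleMap 0 r θ) - 1)) = 0 := by
  set U := {z : ℂ | 1 < ‖z‖} with hUdef
  have hU : IsOpen U := isOpen_lt continuous_const continuous_norm
  have hz0 : ∀ z ∈ U, z ≠ 0 := by
    intro z hz h0
    rw [hUdef, mem_setOf_eq, h0] at hz
    simp at hz
    linarith
  have hrpos : (0:ℝ) < r := by linarith
  set g1 : ℂ → ℂ := fun z => (φ z - z) / z with hg1def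
  have hφat : ∀ z ∈ U, DifferentiableAt ℂ φ z := fun z hz => hφ.differentiableAt (hU.mem_nhds hz)
  have hΨat : ∀ z ∈ U, HasDerivAt (fun w => φ w - w) (deriv φ z - 1) z := fun z hz =>
    ((hφat z hz).hasDerivAt).sub (hasDerivAt_id z)
  have hg1at : ∀ z ∈ U, HasDerivAt g1 (((deriv φ z - 1) * z - (φ z - z) * 1) / z ^ 2) z :=
    fun z hz => (hΨat z hz).div (hasDerivAt_id z) (hz0 z hz)
  have hid : ∀ z ∈ U, deriv g1 z = (deriv φ z - 1) / z - (φ z - z) / z ^ 2 := by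
    intro z hz
    rw [(hg1at z hz).deriv]
    have h0 := hz0 z hz
    field_simp
  have hφan : AnalyticOnNhd ℂ φ U := hφ.analyticOnNhd hU
  have hdφcont : ContinuousOn (deriv φ) U := hφan.deriv.continuousOn
  have hg1diff : DifferentiableOn ℂ g1 U :=
    (hφ.sub differentiable_id.differentiableOn).div differentiable_id.differentiableOn hz0
  have hg1an : AnalyticOnNhd ℂ g1 U := hg1diff.analyticOnNhd hU
  have hdg1cont : ContinuousOn (deriv g1) U := hg1an.deriv.continuousOn
  have hfcont : ContinuousOn (fun z => (deriv φ z - 1) / z) U :=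
    (hdφcont.sub continuousOn_const).div continuousOn_id hz0
  have hgcont : ContinuousOn (fun z => (φ z - z) / z ^ 2) U :=
    (hφ.continuousOn.sub continuousOn_id).div (continuousOn_id.pow 2)
      (fun z hz => pow_ne_zero 2 (hz0 z hz))
  have hsub : ∀ {R : ℝ}, 1 < R → sphere (0:ℂ) R ⊆ U := by
    intro R hR z hz
    rw [mem_sphere_zero_iff_norm] at hz
    rw [hUdef, mem_setOf_eq, hz]
    exact hR
  -- FTC step : the circle integral of deriv g1 vanishes
  have hFTC : ∀ R : ℝ, 1 < R → (∮ z in C(0, R), deriv g1 z) = 0 := by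
    intro R hR
    have hRpos : (0:ℝ) < R := by linarith
    have hmemR : ∀ θ : ℝ, circleMap 0 R θ ∈ U := fun θ =>
      hsub hR (circleMap_mem_sphere 0 hRpos.le θ)
    have hder : ∀ θ ∈ Set.uIcc (0:ℝ) (2*Real.pi), HasDerivAt (fun t => g1 (circleMap 0 R t))
        (deriv (circleMap 0 R) θ • deriv g1 (circleMap 0 R θ)) θ := by
      intro θ _
      have h1 : HasDerivAt g1 (deriv g1 (circleMap 0 R θ)) (circleMap 0 R θ) :=
        (hg1diff.differentiableAt (hU.mem_nhds (hmemR θ))).hasDerivAt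
      have h2 : HasDerivAt (circleMap 0 R) (circleMap 0 R θ * Complex.I) θ :=
        hasDerivAt_circleMap 0 R θ
      have := h1.comp θ h2
      simp only [deriv_circleMap, smul_eq_mul]
      rw [mul_comm]
      exact this
    have hint : IntervalIntegrable
        (fun θ => deriv (circleMap 0 R) θ • deriv g1 (circleMap 0 R θ))
        MeasureTheory.volume 0 (2*Real.pi) := by
      apply Continuous.intervalIntegrable
      have hc : Continuous fun θ => deriv g1 (circleMap 0 R θ) :=
        hdg1cont.comp_continuous (continuous_circleMap 0 R) hmemR
      have hc2 : Continuous fun θ => deriv (circleMap 0 R) θ := by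
        simp only [deriv_circleMap]
        exact (continuous_circleMap 0 R).mul continuous_const
      exact hc2.smul hc
    have hFT := intervalIntegral.integral_eq_sub_of_hasDerivAt hder hint
    rw [circleIntegral, hFT]
    have hper : circleMap 0 R (2*Real.pi) = circleMap 0 R 0 := by
      have := (periodic_circleMap 0 R) 0
      simpa using this
    rw [hper, sub_self]
  -- bound on φ z - z for r ≤ |z|
  have hrC : ‖(r : ℂ)‖ = r := by
    rw [Complex.norm_real, Real.norm_eq_abs, abs_of_pos hrpos]
  have hsum_r : Summable (fun k : ℕ => ‖ψc k‖ / r ^ k) := by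
    have h := (hsum (r:ℂ) (by rw [hrC]; exact hr)).summable.norm
    have heq : ∀ k : ℕ, ‖ψc k / (r:ℂ) ^ k‖ = ‖ψc k‖ / r ^ k := by
      intro k
      rw [norm_div, norm_pow]
      simp [Complex.norm_real, Real.norm_eq_abs, abs_of_pos ‹(0:ℝ) < r›]
    simpa [heq, abs_of_pos hrpos] using h
  set M := ∑' k, ‖ψc k‖ / r ^ k with hMdef
  have hM0 : 0 ≤ M := tsum_nonneg fun k => div_nonneg (norm_nonneg _) (pow_nonneg hrpos.le k)
  have hΨb : ∀ z : ℂ, r ≤ ‖z‖ → ‖φ z - z‖ ≤ M := by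
    intro z hz
    have hz1 : 1 < ‖z‖ := by linarith
    have hle : ∀ k : ℕ, ‖ψc k / z ^ k‖ ≤ ‖ψc k‖ / r ^ k := by
      intro k
      rw [norm_div, norm_pow]
      have h1 : r ^ k ≤ ‖z‖ ^ k := pow_le_pow_left₀ ‹(0:ℝ) < r›.le hz k
      exact div_le_div_of_nonneg_left (norm_nonneg _) (pow_pos ‹(0:ℝ) < r› k) h1 |>.trans_eq rfl |> id
    have hsz : Summable (fun k => ‖ψc k / z ^ k‖) :=
      Summable.of_nonneg_of_le (fun k => norm_nonneg _) hle hsum_r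
    calc ‖φ z - z‖ = ‖∑' k, ψc k / z ^ k‖ := by rw [(hsum z hz1).tsum_eq]
      _ ≤ ∑' k, ‖ψc k / z ^ k‖ := norm_tsum_le_tsum_norm hsz
      _ ≤ M := Summable.tsum_le_tsum hle hsz hsum_r
  -- main bound chain
  have hIR : ∀ R : ℝ, r ≤ R → ‖∮ z in C(0, r), (deriv φ z - 1) / z‖ ≤ 2 * Real.pi * M / R := by
    intro R hrR
    have hR1 : 1 < R := lt_of_lt_of_le hr hrR
    have hRpos : (0:ℝ) < R := by linarith
    have hannset : closedBall (0:ℂ) R \ ball 0 r ⊆ U := by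
      intro z hz
      rcases hz with ⟨-, hz2⟩
      rw [mem_ball, dist_zero_right, not_lt] at hz2
      rw [hUdef, mem_setOf_eq]
      linarith
    have hann : (∮ z in C(0, R), (deriv φ z - 1) / z) = ∮ z in C(0, r), (deriv φ z - 1) / z := by
      apply circleIntegral_eq_of_differentiable_on_annulus_off_countable hrpos hrR
        Set.countable_empty (hfcont.mono hannset)
      intro z hz
      have hzU : z ∈ U := by
        apply hannset
        exact ⟨ball_subset_closedBall hz.1.1, fun hb => hz.1.2 (ball_subset_closedBall hb)⟩
      exact ((hφan.deriv z hzU).differentiableAt.sub (differentiableAt_const 1)).div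
        differentiableAt_id (hz0 z hzU)
    have hsubR : sphere (0:ℂ) R ⊆ U := hsub hR1
    have hfint : CircleIntegrable (fun z => (deriv φ z - 1) / z) 0 R :=
      (hfcont.mono hsubR).circleIntegrable hRpos.le
    have hgint : CircleIntegrable (fun z => (φ z - z) / z ^ 2) 0 R :=
      (hgcont.mono hsubR).circleIntegrable hRpos.le
    have hsplit : (∮ z in C(0, R), (deriv φ z - 1) / z) = ∮ z in C(0, R), (φ z - z) / z ^ 2 := by
      have h1 : (∮ z in C(0, R), deriv g1 z)
          = ∮ z in C(0, R), ((deriv φ z - 1) / z - (φ z - z) / z ^ 2) :=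
        circleIntegral.integral_congr hRpos.le (fun z hz => hid z (hsubR hz))
      have h2 := circleIntegral.integral_sub hfint hgint
      have h3 : (0:ℂ) = (∮ z in C(0, R), (deriv φ z - 1) / z)
          - ∮ z in C(0, R), (φ z - z) / z ^ 2 := by
        rw [← h2, ← h1, hFTC R hR1]
      exact sub_eq_zero.mp h3.symm
    rw [← hann, hsplit]
    have hb := circleIntegral.norm_integral_le_of_norm_le_const (c := (0:ℂ))
      (f := fun z => (φ z - z) / z ^ 2) (C := M / R ^ 2) hRpos.le ?_
    · calc ‖∮ z in C(0, R), (φ z - z) / z ^ 2‖ ≤ 2 * Real.pi * R * (M / R ^ 2) := hb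
        _ = 2 * Real.pi * M / R := by field_simp
    · intro z hz
      rw [mem_sphere_zero_iff_norm] at hz
      rw [norm_div, norm_pow, hz]
      have hM : ‖φ z - z‖ ≤ M := hΨb z (by rw [hz]; exact hrR)
      gcongr
  -- conclude : the circle integral at radius r is zero
  have hnorm0 : ‖∮ z in C(0, r), (deriv φ z - 1) / z‖ ≤ 0 := by
    have ht : Filter.Tendsto (fun R : ℝ => 2 * Real.pi * M / R) Filter.atTop (nhds 0) :=
      Filter.Tendsto.div_atTop tendsto_const_nhds Filter.tendsto_id
    exact ge_of_tendsto ht ((Filter.eventually_ge_atTop r).mono fun R hR => hIR R hR)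
  have hI0 : (∮ z in C(0, r), (deriv φ z - 1) / z) = 0 := norm_le_zero_iff.mp hnorm0
  have hfin : (∮ z in C(0, r), (deriv φ z - 1) / z)
      = Complex.I * ∫ θ in (0:ℝ)..(2*Real.pi), (deriv φ (circleMap 0 r θ) - 1) := by
    rw [circleIntegral, ← intervalIntegral.integral_const_mul]
    refine intervalIntegral.integral_congr fun θ _ => ?_
    have hz : circleMap 0 r θ ≠ 0 := by
      simp only [circleMap, zero_add]
      exact mul_ne_zero (by exact_mod_cast ne_of_gt hrpos) (Complex.exp_ne_zero _)
    simp only [deriv_circleMap, smul_eq_mul]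
    field_simp
  rw [hfin] at hI0
  exact (mul_eq_zero.mp hI0).resolve_left Complex.I_ne_zero

lemma pointwise_est (ζ : ℝ) {δ₀ ψv τ τt : ℝ} {d : ℂ}
    (hδ0 : 0 < δ₀) (hδε : δ₀ ≤ (4 * (|ζ| + 1))⁻¹)
    (hψ : |ψv| ≤ δ₀) (hd : ‖d - 1‖ ≤ δ₀)
    (hτ : τ = τt + ψv) :
    |Real.exp (-(ζ * τ)) * ‖d‖ ^ (-ζ)
      - Real.exp (-(ζ * τt)) + ζ * Real.exp (-(ζ * τt)) * ψv
      + ζ * Real.exp (-(ζ * τt)) * (d - 1).re|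
      ≤ Real.exp (-(ζ * τt)) * (9 * ζ ^ 2 + 4 * |ζ|) * δ₀ ^ 2 := by
  have hζ1 : (0:ℝ) < 4 * (|ζ| + 1) := by positivity
  have hδ4 : δ₀ ≤ 1/4 := by
    refine hδε.trans ?_
    rw [inv_le_comm₀ (by positivity) (by norm_num)]
    nlinarith [abs_nonneg ζ]
  have hζδ : |ζ| * δ₀ ≤ 1/4 := by
    have h1 : |ζ| * δ₀ ≤ |ζ| * (4 * (|ζ| + 1))⁻¹ :=
      mul_le_mul_of_nonneg_left hδε (abs_nonneg ζ)
    have h2 : |ζ| * (4 * (|ζ| + 1))⁻¹ ≤ 1/4 := by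
      rw [mul_inv_le_iff₀ hζ1]
      nlinarith [abs_nonneg ζ]
    linarith
  set a := ‖d‖ with hadef
  have ha1 : |a - 1| ≤ δ₀ := by
    have h := abs_norm_sub_norm_le d 1
    rw [norm_one] at h
    exact h.trans hd
  have ha0 : (0:ℝ) < a := by
    have := abs_le.mp ha1
    linarith
  obtain ⟨hlog, hlog2⟩ := log_est hδ4 hδ0.le ha1
  set E := Real.exp (-(ζ * τt)) with hEdef
  have hE0 : (0:ℝ) < E := Real.exp_pos _
  set x := -(ζ * ψv) with hxdef
  set y := -(ζ * Real.log a) with hydef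
  have hx : |x| ≤ |ζ| * δ₀ := by
    rw [hxdef, abs_neg, abs_mul]
    exact mul_le_mul_of_nonneg_left hψ (abs_nonneg ζ)
  have hy : |y| ≤ |ζ| * (2 * δ₀) := by
    rw [hydef, abs_neg, abs_mul]
    exact mul_le_mul_of_nonneg_left hlog (abs_nonneg ζ)
  have hs : |x + y| ≤ 3 * (|ζ| * δ₀) := by
    calc |x + y| ≤ |x| + |y| := abs_add_le _ _
      _ ≤ |ζ| * δ₀ + |ζ| * (2 * δ₀) := add_le_add hx hy
      _ = 3 * (|ζ| * δ₀) := by ring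
  have hs1 : |x + y| ≤ 1 := by linarith
  have hexp := Real.abs_exp_sub_one_sub_id_le hs1
  have hs2 : (x + y) ^ 2 ≤ 9 * ζ ^ 2 * δ₀ ^ 2 := by
    have h1 : (x + y) ^ 2 = |x + y| ^ 2 := (_root_.sq_abs _).symm
    rw [h1]
    have h2 : |x + y| ^ 2 ≤ (3 * (|ζ| * δ₀)) ^ 2 := by
      apply pow_le_pow_left₀ (abs_nonneg _) hs
    calc |x + y| ^ 2 ≤ (3 * (|ζ| * δ₀)) ^ 2 := h2
      _ = 9 * ζ ^ 2 * δ₀ ^ 2 := by rw [mul_pow, mul_pow, _root_.sq_abs]; ring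
  have hre : |a - 1 - (d - 1).re| ≤ 2 * δ₀ ^ 2 := by
    have h := abs_one_add_sub_one_sub_re (d - 1)
    rw [show (1 : ℂ) + (d - 1) = d by ring] at h
    refine h.trans ?_
    have : ‖d - 1‖ ^ 2 ≤ δ₀ ^ 2 := pow_le_pow_left₀ (norm_nonneg _) hd 2
    linarith
  have hyz : |y + ζ * (d - 1).re| ≤ 4 * |ζ| * δ₀ ^ 2 := by
    have heq : y + ζ * (d - 1).re
        = -(ζ * (Real.log a - (a - 1))) - ζ * (a - 1 - (d - 1).re) := by
      rw [hydef]; ring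
    rw [heq]
    calc |(-(ζ * (Real.log a - (a - 1)))) - ζ * (a - 1 - (d - 1).re)|
        ≤ |ζ * (Real.log a - (a - 1))| + |ζ * (a - 1 - (d - 1).re)| := by
          refine (abs_sub _ _).trans ?_
          rw [abs_neg]
      _ = |ζ| * |Real.log a - (a - 1)| + |ζ| * |a - 1 - (d - 1).re| := by
          rw [abs_mul, abs_mul]
      _ ≤ |ζ| * (2 * δ₀ ^ 2) + |ζ| * (2 * δ₀ ^ 2) := by
          exact add_le_add (mul_le_mul_of_nonneg_left hlog2 (abs_nonneg ζ))
            (mul_le_mul_of_nonneg_left hre (abs_nonneg ζ))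
      _ = 4 * |ζ| * δ₀ ^ 2 := by ring
  have hrw : Real.exp (-(ζ * τ)) * a ^ (-ζ) = E * Real.exp (x + y) := by
    rw [Real.rpow_def_of_pos ha0, hEdef, ← Real.exp_add, ← Real.exp_add]
    congr 1
    rw [hτ, hxdef, hydef]
    ring
  rw [hrw]
  have hkey : E * Real.exp (x + y) - E + ζ * E * ψv + ζ * E * (d - 1).re
      = E * ((Real.exp (x + y) - 1 - (x + y)) + (y + ζ * (d - 1).re)) := by
    rw [hxdef]
    ring
  rw [hkey, abs_mul, abs_of_pos hE0]
  have hsum : |(Real.exp (x + y) - 1 - (x + y)) + (y + ζ * (d - 1).re)|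
      ≤ 9 * ζ ^ 2 * δ₀ ^ 2 + 4 * |ζ| * δ₀ ^ 2 := by
    calc |(Real.exp (x + y) - 1 - (x + y)) + (y + ζ * (d - 1).re)|
        ≤ |Real.exp (x + y) - 1 - (x + y)| + |y + ζ * (d - 1).re| := abs_add_le _ _
      _ ≤ 9 * ζ ^ 2 * δ₀ ^ 2 + 4 * |ζ| * δ₀ ^ 2 :=
          add_le_add (hexp.trans hs2) hyz
  calc E * |(Real.exp (x + y) - 1 - (x + y)) + (y + ζ * (d - 1).re)|
      ≤ E * (9 * ζ ^ 2 * δ₀ ^ 2 + 4 * |ζ| * δ₀ ^ 2) :=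
        mul_le_mul_of_nonneg_left hsum hE0.le
    _ = E * (9 * ζ ^ 2 + 4 * |ζ|) * δ₀ ^ 2 := by ring

end Helpers

set_option maxHeartbeats 1000000 in
/-- Capacity-drift estimate (Lemma BEST): for `ζ ∈ ℝ` and `T ∈ [0, t_ζ)` there is
`C = C(ζ,T)` such that for `σ > 0`, `δ₀ ∈ (0,1/2]`, `t ∈ [0,T]`, `τ ≥ 0` and `φ̂ ∈ S₁`
with `|ψ^cap| = |τ - τ_t| ≤ δ₀` and `|ψ̂'(e^σ e^{iθ})| = |φ̂'(e^σ e^{iθ}) - 1| ≤ δ₀` for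
all `θ`, one has
`|⨍₀^{2π} e^{-ζτ}|φ̂'(e^σ e^{iθ})|^{-ζ} dθ - e^{-ζτ_t} + ζ e^{-ζτ_t}(τ - τ_t)| ≤ Cδ₀²`. -/
theorem stmt17 (ζ T : ℝ) (hT0 : 0 ≤ T) (hTζ : ζ < 0 → T < |ζ|⁻¹) :
    ∃ C : ℝ, ∀ (σ δ₀ t τ : ℝ) (φ : ℂ → ℂ) (ψc : ℕ → ℂ),
      0 < σ → 0 < δ₀ → δ₀ ≤ 1 / 2 → 0 ≤ t → t ≤ T → 0 ≤ τ →
      DifferentiableOn ℂ φ {z : ℂ | 1 < ‖z‖} →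
      Set.InjOn φ {z : ℂ | 1 < ‖z‖} →
      (∀ z : ℂ, 1 < ‖z‖ → HasSum (fun k : ℕ => ψc k / z ^ k) (φ z - z)) →
      |τ - tauLK ζ t| ≤ δ₀ →
      (∀ θ : ℝ,
        ‖deriv φ (Real.exp σ * Complex.exp (θ * Complex.I)) - 1‖ ≤ δ₀) →
      |((2 * Real.pi)⁻¹ *
          ∫ θ in (0:ℝ)..(2 * Real.pi),
            Real.exp (-(ζ * τ)) *
              ‖deriv φ (Real.exp σ * Complex.exp (θ * Complex.I))‖ ^ (-ζ))
        - Real.exp (-(ζ * tauLK ζ t))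
        + ζ * Real.exp (-(ζ * tauLK ζ t)) * (τ - tauLK ζ t)| ≤ C * δ₀ ^ 2 := by
  have h1ζT : 0 < 1 + ζ * T := by
    rcases le_or_gt 0 ζ with h | h
    · nlinarith
    · have h2 := hTζ h
      rw [abs_of_neg h] at h2
      have h3 : (-ζ) * T < (-ζ) * (-ζ)⁻¹ := (mul_lt_mul_iff_right₀ (neg_pos.2 h)).2 h2
      rw [mul_inv_cancel₀ (ne_of_gt (neg_pos.2 h))] at h3
      nlinarith
  set B : ℝ := max 1 (1 + ζ * T)⁻¹ with hBdef
  have hB1 : (1:ℝ) ≤ B := le_max_left _ _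
  have hB0 : (0:ℝ) < B := lt_of_lt_of_le one_pos hB1
  set ε : ℝ := (4 * (|ζ| + 1))⁻¹ with hεdef
  have hεpos : (0:ℝ) < ε := by positivity
  set G : ℝ := B * Real.exp (|ζ| / 2) * Real.exp (|ζ| * Real.log 2) with hGdef
  have hG0 : (0:ℝ) < G := by positivity
  set A : ℝ := G + B + |ζ| * B / 2 with hAdef
  have hA0 : (0:ℝ) < A := by positivity
  set C₁ : ℝ := B * (9 * ζ ^ 2 + 4 * |ζ|) with hC1def
  have hC10 : (0:ℝ) ≤ C₁ := by positivity
  refine ⟨max (A / ε ^ 2) C₁, ?_⟩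
  intro σ δ₀ t τ φ ψc hσ hδ₀ hδhalf ht0 htT hτ0 hφ hinj hsum hψcap hw
  set r := Real.exp σ with hrdef
  have hr1 : 1 < r := by rw [hrdef]; exact Real.one_lt_exp_iff.mpr hσ
  have hrpos : (0:ℝ) < r := by linarith
  -- rewrite points as circleMap
  have hpt : ∀ θ : ℝ, ((Real.exp σ : ℝ) : ℂ) * Complex.exp (θ * Complex.I)
      = circleMap 0 r θ := by
    intro θ
    simp [circleMap, hrdef]
  set τt := tauLK ζ t with hτtdef
  set ψv := τ - τt with hψvdef
  have hψvle : |ψv| ≤ δ₀ := hψcap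
  set E := Real.exp (-(ζ * τt)) with hEdef
  have hE0 : (0:ℝ) < E := Real.exp_pos _
  -- E ≤ B
  have h1ζt : 0 < 1 + ζ * t := by
    rcases le_or_gt 0 ζ with h | h
    · nlinarith
    · nlinarith [mul_nonneg (sub_nonneg.2 htT) (neg_nonneg.2 h.le)]
  have hEB : E ≤ B := by
    rcases eq_or_ne ζ 0 with hz | hz
    · rw [hEdef, hτtdef, hz]
      simp
      exact hB1
    · have hτtval : ζ * tauLK ζ t = Real.log (1 + ζ * t) := by
        rw [tauLK, if_neg hz]
        field_simp
      rw [hEdef, hτtdef, hτtval, Real.exp_neg, Real.exp_log h1ζt]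
      rcases le_or_gt 0 ζ with h | h
      · refine le_trans ?_ hB1
        rw [inv_le_one_iff₀]
        right
        nlinarith
      · refine le_trans ?_ (le_max_right 1 (1 + ζ * T)⁻¹)
        apply inv_anti₀ h1ζT
        nlinarith [mul_nonneg (sub_nonneg.2 htT) (neg_nonneg.2 h.le)]
  -- continuity setup
  set U := {z : ℂ | 1 < ‖z‖} with hUdef
  have hU : IsOpen U := isOpen_lt continuous_const continuous_norm
  have hcmem : ∀ θ : ℝ, circleMap 0 r θ ∈ U := by
    intro θ
    rw [hUdef, Set.mem_setOf_eq]
    rw [show ‖circleMap 0 r θ‖ = |r| by simpa using abs_circleMap_zero r θ]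
    rwa [abs_of_pos hrpos]
  have hdcont : Continuous fun θ : ℝ => deriv φ (circleMap 0 r θ) :=
    ((hφ.analyticOnNhd hU).deriv.continuousOn).comp_continuous (continuous_circleMap 0 r) hcmem
  have hwle : ∀ θ : ℝ, ‖deriv φ (circleMap 0 r θ) - 1‖ ≤ δ₀ := by
    intro θ
    have := hw θ
    rwa [hpt θ] at this
  have habs_lb : ∀ θ : ℝ, 1 - δ₀ ≤ ‖deriv φ (circleMap 0 r θ)‖ := by
    intro θ
    have h := abs_norm_sub_norm_le (deriv φ (circleMap 0 r θ)) 1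
    rw [norm_one] at h
    have h2 := (abs_le.mp (h.trans (hwle θ))).1
    linarith
  have habs_ub : ∀ θ : ℝ, ‖deriv φ (circleMap 0 r θ)‖ ≤ 1 + δ₀ := by
    intro θ
    have h := abs_norm_sub_norm_le (deriv φ (circleMap 0 r θ)) 1
    rw [norm_one] at h
    have h2 := (abs_le.mp (h.trans (hwle θ))).2
    linarith
  set g : ℝ → ℝ := fun θ => Real.exp (-(ζ * τ)) *
      ‖deriv φ (circleMap 0 r θ)‖ ^ (-ζ) with hgdef
  have hgcont : Continuous g := by
    apply continuous_const.mul
    apply Continuous.rpow_const (continuous_norm.comp hdcont)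
    intro θ
    left
    have := habs_lb θ
    intro h0
    rw [Function.comp_apply] at h0
    rw [h0] at this
    linarith
  -- rewrite the integral in terms of g
  have hIrw : (∫ θ in (0:ℝ)..(2 * Real.pi),
      Real.exp (-(ζ * τ)) *
        ‖deriv φ (Real.exp σ * Complex.exp (θ * Complex.I))‖ ^ (-ζ))
      = ∫ θ in (0:ℝ)..(2 * Real.pi), g θ := by
    refine intervalIntegral.integral_congr fun θ _ => ?_
    rw [hgdef]
    simp only [hpt θ]
  rw [hIrw]
  set J := (2 * Real.pi)⁻¹ * ∫ θ in (0:ℝ)..(2 * Real.pi), g θ with hJdef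
  -- pointwise crude bound |g θ| ≤ G
  have hgb : ∀ θ : ℝ, |g θ| ≤ G := by
    intro θ
    set aθ := ‖deriv φ (circleMap 0 r θ)‖ with haθ
    have hlb : 1 - δ₀ ≤ aθ := habs_lb θ
    have hub : aθ ≤ 1 + δ₀ := habs_ub θ
    have ha0 : (0:ℝ) < aθ := by linarith
    have hlog : |Real.log aθ| ≤ Real.log 2 := by
      rw [abs_le]
      constructor
      · have h1 : Real.log (1/2 : ℝ) ≤ Real.log aθ :=
          Real.log_le_log (by norm_num) (by linarith)
        have h2 : Real.log (1/2 : ℝ) = -Real.log 2 := by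
          rw [show (1/2 : ℝ) = 2⁻¹ by norm_num, Real.log_inv]
        linarith
      · have h1 : Real.log aθ ≤ Real.log 2 := Real.log_le_log ha0 (by linarith)
        exact h1
    have h1 : g θ = Real.exp (-(ζ * τ)) * Real.exp (Real.log aθ * (-ζ)) := by
      simp only [hgdef]
      rw [← haθ, Real.rpow_def_of_pos ha0]
    have h2 : Real.exp (-(ζ * τ)) ≤ B * Real.exp (|ζ| / 2) := by
      have : -(ζ * τ) = -(ζ * τt) + -(ζ * ψv) := by rw [hψvdef]; ring
      rw [this, Real.exp_add]
      have hψe : Real.exp (-(ζ * ψv)) ≤ Real.exp (|ζ| / 2) := by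
        apply Real.exp_le_exp.2
        have habs2 : |(-(ζ * ψv))| ≤ |ζ| * δ₀ := by
          rw [abs_neg, abs_mul]
          exact mul_le_mul_of_nonneg_left hψvle (abs_nonneg ζ)
        have h4 := (abs_le.mp habs2).2
        nlinarith [abs_nonneg ζ]
      exact mul_le_mul hEB hψe (Real.exp_pos _).le hB0.le
    have h3 : Real.exp (Real.log aθ * (-ζ)) ≤ Real.exp (|ζ| * Real.log 2) := by
      apply Real.exp_le_exp.2
      have hh : Real.log aθ * (-ζ) ≤ |Real.log aθ| * |ζ| := by
        refine (le_abs_self _).trans ?_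
        rw [abs_mul, abs_neg]
      refine hh.trans ?_
      rw [mul_comm (|ζ|) (Real.log 2)]
      exact mul_le_mul_of_nonneg_right hlog (abs_nonneg ζ)
    have h4 : 0 ≤ g θ := by
      rw [h1]
      positivity
    rw [_root_.abs_of_nonneg h4]
    rw [h1]
    rw [hGdef]
    exact mul_le_mul h2 h3 (Real.exp_pos _).le (by positivity)
  have hJb : |J| ≤ G := by
    rw [hJdef, abs_mul]
    have h1 : ‖∫ θ in (0:ℝ)..(2 * Real.pi), g θ‖ ≤ G * |2 * Real.pi - 0| :=
      intervalIntegral.norm_integral_le_of_norm_le_const fun θ _ => by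
        rw [Real.norm_eq_abs]; exact hgb θ
    rw [Real.norm_eq_abs] at h1
    have h2 : |(2 * Real.pi)⁻¹| = (2 * Real.pi)⁻¹ :=
      abs_of_pos (by positivity)
    rw [h2]
    have h3 : |2 * Real.pi - 0| = 2 * Real.pi := by
      rw [sub_zero]; exact abs_of_pos (by positivity)
    rw [h3] at h1
    calc (2 * Real.pi)⁻¹ * |∫ θ in (0:ℝ)..(2 * Real.pi), g θ|
        ≤ (2 * Real.pi)⁻¹ * (G * (2 * Real.pi)) := by
          exact mul_le_mul_of_nonneg_left h1 (by positivity)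
      _ = G := by field_simp
  rcases le_or_gt δ₀ ε with hδε | hδε
  · -- main regime
    have hre0 : (∫ θ in (0:ℝ)..(2 * Real.pi), (deriv φ (circleMap 0 r θ) - 1).re) = 0 := by
      have hint : IntervalIntegrable (fun θ => deriv φ (circleMap 0 r θ) - 1)
          MeasureTheory.volume 0 (2 * Real.pi) :=
        (hdcont.sub continuous_const).intervalIntegrable _ _
      have h := ContinuousLinearMap.intervalIntegral_comp_comm Complex.reCLM hint
      have h0 := meanZero hφ hsum hr1
      rw [h0] at h
      simpa using h
    have hwre_int : IntervalIntegrable (fun θ => (deriv φ (circleMap 0 r θ) - 1).re)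
        MeasureTheory.volume 0 (2 * Real.pi) :=
      (Complex.continuous_re.comp (hdcont.sub continuous_const)).intervalIntegrable _ _
    have hg_int : IntervalIntegrable g MeasureTheory.volume 0 (2 * Real.pi) :=
      hgcont.intervalIntegrable _ _
    set K := E - ζ * E * ψv with hKdef
    have hsplit : (∫ θ in (0:ℝ)..(2 * Real.pi),
        (g θ - K + ζ * E * (deriv φ (circleMap 0 r θ) - 1).re))
        = (∫ θ in (0:ℝ)..(2 * Real.pi), g θ) - (2 * Real.pi) * K := by
      rw [intervalIntegral.integral_add (hg_int.sub intervalIntegrable_const)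
        (hwre_int.const_mul _)]
      rw [intervalIntegral.integral_sub hg_int intervalIntegrable_const]
      have hpull : (∫ x in (0:ℝ)..(2 * Real.pi), ζ * E * (deriv φ (circleMap 0 r x) - 1).re)
          = ζ * E * ∫ x in (0:ℝ)..(2 * Real.pi), (deriv φ (circleMap 0 r x) - 1).re :=
        intervalIntegral.integral_const_mul _ _
      rw [hpull, hre0, mul_zero, add_zero, intervalIntegral.integral_const]
      simp only [sub_zero, smul_eq_mul]
    have hpw : ∀ θ ∈ Set.uIoc (0:ℝ) (2 * Real.pi),
        ‖g θ - K + ζ * E * (deriv φ (circleMap 0 r θ) - 1).re‖ ≤ C₁ * δ₀ ^ 2 := by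
      intro θ _
      rw [Real.norm_eq_abs]
      have h := pointwise_est ζ hδ₀ (hεdef ▸ hδε) hψvle (hwle θ)
        (show τ = τt + ψv by rw [hψvdef]; ring)
      have hEq : g θ - K + ζ * E * (deriv φ (circleMap 0 r θ) - 1).re
          = Real.exp (-(ζ * τ)) * ‖deriv φ (circleMap 0 r θ)‖ ^ (-ζ)
            - Real.exp (-(ζ * τt)) + ζ * Real.exp (-(ζ * τt)) * ψv
            + ζ * Real.exp (-(ζ * τt)) * (deriv φ (circleMap 0 r θ) - 1).re := by
        simp only [hgdef, hKdef, hEdef]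
        ring
      rw [hEq]
      refine h.trans ?_
      rw [hC1def]
      have h2 : Real.exp (-(ζ * τt)) * (9 * ζ ^ 2 + 4 * |ζ|)
          ≤ B * (9 * ζ ^ 2 + 4 * |ζ|) := by
        apply mul_le_mul_of_nonneg_right _ (by positivity)
        rw [← hEdef]
        exact hEB
      exact mul_le_mul_of_nonneg_right h2 (by positivity)
    have hnorm : ‖∫ θ in (0:ℝ)..(2 * Real.pi),
        (g θ - K + ζ * E * (deriv φ (circleMap 0 r θ) - 1).re)‖
        ≤ C₁ * δ₀ ^ 2 * |2 * Real.pi - 0| :=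
      intervalIntegral.norm_integral_le_of_norm_le_const hpw
    have hfin : J - E + ζ * E * ψv = (2 * Real.pi)⁻¹ *
        ∫ θ in (0:ℝ)..(2 * Real.pi),
          (g θ - K + ζ * E * (deriv φ (circleMap 0 r θ) - 1).re) := by
      rw [hsplit, hJdef, hKdef]
      have hπ : (2 * Real.pi) ≠ 0 := by positivity
      field_simp
      ring
    have h2π : |2 * Real.pi - 0| = 2 * Real.pi := by
      rw [sub_zero]
      exact abs_of_pos (by positivity)
    rw [h2π] at hnorm
    rw [Real.norm_eq_abs] at hnorm
    have habs2 : |J - E + ζ * E * ψv| ≤ (2 * Real.pi)⁻¹ * (C₁ * δ₀ ^ 2 * (2 * Real.pi)) := by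
      rw [hfin, abs_mul, abs_of_pos (show (0:ℝ) < (2 * Real.pi)⁻¹ by positivity)]
      exact mul_le_mul_of_nonneg_left hnorm (by positivity)
    calc |J - E + ζ * E * ψv| ≤ (2 * Real.pi)⁻¹ * (C₁ * δ₀ ^ 2 * (2 * Real.pi)) := habs2
      _ = C₁ * δ₀ ^ 2 := by
          field_simp
      _ ≤ max (A / ε ^ 2) C₁ * δ₀ ^ 2 :=
          mul_le_mul_of_nonneg_right (le_max_right _ _) (by positivity)
  · -- crude regime
    have hcrude : |J - E + ζ * E * ψv| ≤ A := by
      have h1 : |J - E + ζ * E * ψv| ≤ |J| + E + |ζ| * E * |ψv| := by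
        have := abs_add_le (J - E) (ζ * E * ψv)
        have h2 := abs_sub J E
        have h3 : |ζ * E * ψv| = |ζ| * E * |ψv| := by
          rw [abs_mul, abs_mul, abs_of_pos hE0]
        rw [abs_of_pos hE0] at h2
        calc |J - E + ζ * E * ψv| ≤ |J - E| + |ζ * E * ψv| := abs_add_le _ _
          _ ≤ (|J| + E) + |ζ| * E * |ψv| := by rw [h3]; exact add_le_add_left h2 _
          _ = |J| + E + |ζ| * E * |ψv| := by ring
      have h4 : |ζ| * E * |ψv| ≤ |ζ| * B / 2 := by
        have : |ζ| * E * |ψv| ≤ |ζ| * B * (1/2) := by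
          apply mul_le_mul
          · exact mul_le_mul_of_nonneg_left hEB (abs_nonneg ζ)
          · linarith
          · exact abs_nonneg _
          · positivity
        linarith
      rw [hAdef]
      have := hJb
      linarith [hEB]
    have hεδ : ε ^ 2 ≤ δ₀ ^ 2 := by nlinarith
    calc |J - E + ζ * E * ψv| ≤ A := hcrude
      _ = A / ε ^ 2 * ε ^ 2 := by field_simp
      _ ≤ A / ε ^ 2 * δ₀ ^ 2 := by
          apply mul_le_mul_of_nonneg_left hεδ (by positivity)
      _ ≤ max (A / ε ^ 2) C₁ * δ₀ ^ 2 := by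
          apply mul_le_mul_of_nonneg_right (le_max_left _ _) (by positivity)
end
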